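/- Let X be a finite-dimensional complex vector space with a continuous quasi-norm ‖·‖ whose closed unit ball is closed. Then X admits an Auerbach basis: vectors x₁,…,xₙ (n = dim X) with ‖xᵢ‖ = 1 for all i and ‖∑ aᵢxᵢ‖ ≥ max|aᵢ| for all scalars a₁,…,aₙ. -/

import Mathlib

open Module Function

/-- Existence of Auerbach bases for continuous quasi-norms on
finite-dimensional complex vector spaces with closed unit ball. -/
theorem auerbach_basis_exists {X : Type*} [AddCommGroup X] [Module ℂ X]
    [TopologicalSpace X] [IsTopologicalAddGroup X] [ContinuousSMul ℂ X]
    [T2Space X] [FiniteDimensional ℂ X]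
    (q : X → ℝ) (ρ : ℝ) (hρ : 1 ≤ ρ)
    (hq0 : ∀ x, 0 ≤ q x) (hqz : ∀ x, q x = 0 ↔ x = 0)
    (hhom : ∀ (a : ℂ) (x : X), q (a • x) = ‖a‖ * q x)
    (htri : ∀ x y, q (x + y) ≤ ρ * (q x + q y))
    (hcont : Continuous q)
    (hball : IsClosed {x : X | q x ≤ 1}) :
    ∃ b : Basis (Fin (Module.finrank ℂ X)) ℂ X,
      (∀ i, q (b i) = 1) ∧
      ∀ a : Fin (Module.finrank ℂ X) → ℂ,
        ∀ i, ‖a i‖ ≤ q (∑ j, a j • b j) := by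
  rcases Nat.eq_zero_or_pos (finrank ℂ X) with h0 | hn
  · haveI : Subsingleton X := Module.finrank_zero_iff.mp h0
    rw [h0]
    exact ⟨Basis.empty X, fun i => i.elim0, fun a i => i.elim0⟩
  · set n := finrank ℂ X with hn'
    haveI : Nonempty (Fin n) := ⟨⟨0, hn⟩⟩
    let e : Basis (Fin n) ℂ X := Module.finBasis ℂ X
    let φ : X ≃L[ℂ] (Fin n → ℂ) := e.equivFunL
    have hqpos : ∀ x : X, x ≠ 0 → 0 < q x := by
      intro x hx
      rcases (hq0 x).lt_or_eq with h | h
      · exact h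
      · exact absurd ((hqz x).mp h.symm) hx
    set g : (Fin n → ℂ) → ℝ := fun y => q (φ.symm y) with hg
    have hgcont : Continuous g := hcont.comp φ.symm.continuous
    have hghom : ∀ (c : ℂ) (y : Fin n → ℂ), g (c • y) = ‖c‖ * g y := by
      intro c y
      simp only [hg, map_smul, hhom]
    obtain ⟨u₀, hu₀, hu₀min⟩ :=
      (isCompact_sphere (0 : Fin n → ℂ) 1).exists_isMinOn
        (NormedSpace.sphere_nonempty.mpr zero_le_one) hgcont.continuousOn
    set m := g u₀ with hm
    have hu₀ne : u₀ ≠ 0 := by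
      intro h
      rw [h] at hu₀
      simp at hu₀
    have hmpos : 0 < m := by
      apply hqpos
      intro h
      exact hu₀ne (by simpa using φ.symm.injective (by simpa using h))
    have hmle : ∀ y : Fin n → ℂ, m * ‖y‖ ≤ g y := by
      intro y
      rcases eq_or_ne y 0 with rfl | hy
      · have : g 0 = 0 := by
          simp only [hg]
          simp [(hqz _).mpr rfl]
        simp [this]
      · have hny : (0:ℝ) < ‖y‖ := norm_pos_iff.mpr hy
        have hu : ((‖y‖:ℂ)⁻¹ • y) ∈ Metric.sphere (0 : Fin n → ℂ) 1 := by
          simp [norm_smul, hny.ne']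
        have h1 : m ≤ g ((‖y‖:ℂ)⁻¹ • y) := hu₀min hu
        have h2 : g ((‖y‖:ℂ)⁻¹ • y) = ‖y‖⁻¹ * g y := by
          rw [hghom]; simp
        rw [h2] at h1
        calc m * ‖y‖ ≤ (‖y‖⁻¹ * g y) * ‖y‖ := by
              exact mul_le_mul_of_nonneg_right h1 hny.le
          _ = g y := by field_simp
    -- compactness of the unit ball of q
    have hqg : ∀ x : X, g (φ x) = q x := by intro x; simp [hg]
    have hBcomp : IsCompact {x : X | q x ≤ 1} := by
      have hset : {x : X | q x ≤ 1} = ⇑φ.toHomeomorph ⁻¹' {y | g y ≤ 1} := by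
        ext x
        simp only [Set.mem_setOf_eq, Set.mem_preimage, ContinuousLinearEquiv.coe_toHomeomorph]
        rw [hqg]
      rw [hset, Homeomorph.isCompact_preimage]
      apply IsCompact.of_isClosed_subset (isCompact_closedBall (0 : Fin n → ℂ) m⁻¹)
        (isClosed_le hgcont continuous_const)
      intro y hy
      simp only [Metric.mem_closedBall, dist_zero_right]
      have := (hmle y).trans hy
      calc ‖y‖ = m⁻¹ * (m * ‖y‖) := by field_simp
        _ ≤ m⁻¹ * 1 := by
            exact mul_le_mul_of_nonneg_left this (inv_nonneg.mpr hmpos.le)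
        _ = m⁻¹ := mul_one _
    -- the unit sphere of q
    set S : Set X := {x | q x = 1} with hS
    have hScomp : IsCompact S := by
      apply hBcomp.of_isClosed_subset (isClosed_eq hcont continuous_const)
      intro x hx
      exact le_of_eq hx
    have hSmem : ∀ x : X, x ≠ 0 → ((q x : ℂ))⁻¹ • x ∈ S := by
      intro x hx
      have hqx := hqpos x hx
      simp only [hS, Set.mem_setOf_eq, hhom]
      rw [norm_inv, Complex.norm_real, Real.norm_eq_abs, abs_of_pos hqx]
      field_simp
    -- determinant function and its continuity
    set F : (Fin n → X) → ℝ := fun v => ‖e.det v‖ with hF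
    have hdeteq : ∀ v : Fin n → X, e.det v = (Matrix.of fun i j => φ (v j) i).det := by
      intro v
      rw [Basis.det_apply]
      congr 1
    have hFcont : Continuous F := by
      apply Continuous.norm
      have hdc : Continuous fun v : Fin n → X => (Matrix.of fun i j => φ (v j) i).det := by
        apply Continuous.matrix_det
        apply continuous_matrix
        intro i j
        exact (continuous_apply i).comp (φ.continuous.comp (continuous_apply j))
      exact hdc.congr fun v => (hdeteq v).symm
    -- maximize F over S^n
    have hTcomp : IsCompact (Set.univ.pi fun _ : Fin n => S) := isCompact_univ_pi fun _ => hScomp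
    haveI : Nontrivial X := Module.nontrivial_of_finrank_pos hn
    have hTne : (Set.univ.pi fun _ : Fin n => S).Nonempty := by
      obtain ⟨x, hx⟩ := exists_ne (0 : X)
      exact ⟨fun _ => ((q x : ℂ))⁻¹ • x, fun i _ => hSmem x hx⟩
    obtain ⟨v₀, hv₀T, hv₀max⟩ := hTcomp.exists_isMaxOn hTne hFcont.continuousOn
    set M := F v₀ with hM
    have hv₀S : ∀ i, q (v₀ i) = 1 := fun i => hv₀T i (Set.mem_univ i)
    -- M > 0
    have hMpos : 0 < M := by
      set w : Fin n → X := fun i => ((q (e i) : ℂ))⁻¹ • e i with hw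
      have hwT : w ∈ Set.univ.pi fun _ : Fin n => S := by
        intro i _
        exact hSmem (e i) (e.ne_zero i)
      have hdet : e.det w = ∏ i, ((q (e i) : ℂ))⁻¹ := by
        have := (e.det : MultilinearMap ℂ (fun _ : Fin n => X) ℂ).map_smul_univ
          (fun i => ((q (e i) : ℂ))⁻¹) (fun i => e i)
        simp only [hw]
        rw [show (fun i => ((q (e i):ℂ))⁻¹ • e i) = fun i => ((q (e i):ℂ))⁻¹ • (fun j => e j) i from rfl]
        rw [show ⇑(e.det : MultilinearMap ℂ (fun _ : Fin n => X) ℂ) = ⇑e.det from rfl] at this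
        rw [this]
        rw [show (fun j : Fin n => e j) = ⇑e from rfl, Basis.det_self]
        simp
      have hFw : 0 < F w := by
        rw [hF]
        simp only [hdet, norm_pos_iff]
        apply Finset.prod_ne_zero_iff.mpr
        intro i _
        simp only [ne_eq, inv_eq_zero, Complex.ofReal_eq_zero]
        exact (hqpos _ (e.ne_zero i)).ne'
      exact lt_of_lt_of_le hFw (hv₀max hwT)
    -- v₀ is a basis
    have hdet₀ : e.det v₀ ≠ 0 := by
      intro h
      rw [hM, hF] at hMpos
      simp [h] at hMpos
    have hli : LinearIndependent ℂ v₀ :=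
      ((Basis.is_basis_iff_det e).mpr (isUnit_iff_ne_zero.mpr hdet₀)).1
    let b : Basis (Fin n) ℂ X :=
      basisOfLinearIndependentOfCardEqFinrank hli (by simp [hn'])
    have hb : ⇑b = v₀ := coe_basisOfLinearIndependentOfCardEqFinrank _ _
    refine ⟨b, ?_, ?_⟩
    · intro i; rw [hb]; exact hv₀S i
    · intro a i
      rcases eq_or_ne (a i) 0 with h | h
      · simp [h, hq0]
      · set y : X := ∑ j, a j • b j with hy
        have hyne : y ≠ 0 := by
          intro hy0
          apply h
          have h1 : b.equivFun.symm a = 0 := by rw [Basis.equivFun_symm_apply, ← hy, hy0]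
          have h2 : a = 0 := b.equivFun.symm.injective (by rw [h1, map_zero])
          rw [h2]; rfl
        have htpos : 0 < q y := hqpos y hyne
        set t := q y with ht
        set u : Fin n → X := Function.update v₀ i (((t : ℂ))⁻¹ • y) with hu
        have huT : u ∈ Set.univ.pi fun _ : Fin n => S := by
          intro j _
          rcases eq_or_ne j i with rfl | hj
          · simp only [hu, Function.update_self, hS, Set.mem_setOf_eq, hhom]
            rw [norm_inv, Complex.norm_real, Real.norm_eq_abs, abs_of_pos htpos]
            field_simp
            exact ht.symm
          · simp only [hu, Function.update_of_ne hj]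
            exact hv₀T j (Set.mem_univ j)
        have hFu : F u ≤ M := hv₀max huT
        have hdetu : e.det u = ((t:ℂ))⁻¹ * (a i * e.det v₀) := by
          rw [hu, AlternatingMap.map_update_smul, smul_eq_mul]
          congr 1
          rw [hy, ← hb]
          rw [AlternatingMap.map_update_sum]
          rw [Finset.sum_eq_single i
            (fun j _ hj => by
              rw [hb, AlternatingMap.map_update_smul, smul_eq_mul]
              have heq : Function.update v₀ i (v₀ j) i = Function.update v₀ i (v₀ j) j := by
                rw [Function.update_self, Function.update_of_ne hj]
              rw [e.det.map_eq_zero_of_eq _ heq (Ne.symm hj), mul_zero])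
            (fun hi => absurd (Finset.mem_univ i) hi)]
          rw [hb, AlternatingMap.map_update_smul, smul_eq_mul, Function.update_eq_self]
        have hnorm : F u = t⁻¹ * (‖a i‖ * M) := by
          rw [hF]
          simp only [hdetu, norm_mul, norm_inv, Complex.norm_real, Real.norm_eq_abs,
            abs_of_pos htpos]
          rfl
        rw [hnorm] at hFu
        have : ‖a i‖ * M ≤ t * M := by
          calc ‖a i‖ * M = t * (t⁻¹ * (‖a i‖ * M)) := by field_simp
            _ ≤ t * M := mul_le_mul_of_nonneg_left hFu htpos.le
        have := le_of_mul_le_mul_right this hMpos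
        exact this
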